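/- The simple graph G on vertex set {1,2,3,4,5,6,7} with edge set {{1,2},{1,3},{2,3},{2,6},{2,7},{3,4},{3,5},{3,7},{4,5},{4,6},{5,6}} (graph number 831 in the Atlas of Graphs) has minimum rank 3 over the real numbers. -/

import Mathlib

/-- Edge list of graph number 831 in the Atlas of Graphs (vertices 1..7). -/
def atlas831Edges : List (ℕ × ℕ) := [(1,2),(1,3),(2,3),(2,6),(2,7),(3,4),(3,5),(3,7),(4,5),(4,6),(5,6)]


@[simp] lemma Matrix.vecHead_const' {α : Type*} {n : ℕ} (c : α) :
    Matrix.vecHead (fun _ : Fin (n + 1) => c) = c := rfl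

@[simp] lemma Matrix.vecTail_const' {α : Type*} {n : ℕ} (c : α) :
    Matrix.vecTail (fun _ : Fin (n + 1) => c) = (fun _ : Fin n => c) := rfl

@[simp] lemma Matrix.cons_val_five' {α : Type*} {m : ℕ} (x : α) (u : Fin (m + 5) → α) :
    Matrix.vecCons x u 5 =
      Matrix.vecHead (Matrix.vecTail (Matrix.vecTail (Matrix.vecTail (Matrix.vecTail u)))) :=
  rfl

@[simp] lemma Matrix.cons_val_six' {α : Type*} {m : ℕ} (x : α) (u : Fin (m + 6) → α) :
    Matrix.vecCons x u 6 =
      Matrix.vecHead (Matrix.vecTail (Matrix.vecTail (Matrix.vecTail (Matrix.vecTail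
        (Matrix.vecTail u))))) :=
  rfl

/-- A witness matrix of rank 3 with the pattern of graph 831. -/
noncomputable def atlasA : Matrix (Fin 7) (Fin 7) ℝ :=
  !![0, 1, 1, 0, 0, 0, 0;
     1, 1, 1, 0, 0, 1, 1;
     1, 1, 2, -1, -1, 0, 1;
     0, 0, -1, 1, 1, 1, 0;
     0, 0, -1, 1, 1, 1, 0;
     0, 1, 0, 1, 1, 1, 0;
     0, 1, 1, 0, 0, 0, 0]

noncomputable def atlasBT : Matrix (Fin 3) (Fin 7) ℝ :=
  !![1, 1, 1, 0, 0, 1, 1;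
     0, 0, -1, 1, 1, 1, 0;
     1, 0, 0, 0, 0, 1, 1]

noncomputable def atlasC : Matrix (Fin 7) (Fin 3) ℝ :=
  !![1, 0, -1;
     1, 0, 0;
     1, -1, 0;
     0, 1, 0;
     0, 1, 0;
     1, 1, -1;
     1, 0, -1]

lemma atlasA_factor : atlasA = atlasC * atlasBT := by
  ext i j
  fin_cases i <;> fin_cases j <;>
    simp [atlasA, atlasBT, atlasC, Matrix.mul_apply, Fin.sum_univ_succ] <;> norm_num

lemma atlasA_rank_le : atlasA.rank ≤ 3 := by
  rw [atlasA_factor]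
  calc (atlasC * atlasBT).rank ≤ atlasC.rank := Matrix.rank_mul_le_left _ _
    _ ≤ Fintype.card (Fin 3) := Matrix.rank_le_card_width _
    _ = 3 := by simp

/-- Lower bound: any matrix with the pattern of graph 831 has rank at least 3. -/
lemma rank_ge_three (A : Matrix (Fin 7) (Fin 7) ℝ)
    (h12 : A 0 1 ≠ 0) (h34 : A 2 3 ≠ 0) (h56 : A 4 5 ≠ 0)
    (h14 : A 0 3 = 0) (h16 : A 0 5 = 0) (h36 : A 2 5 = 0) :
    3 ≤ A.rank := by
  set M : Matrix (Fin 3) (Fin 3) ℝ := A.submatrix ![0, 2, 4] ![1, 3, 5] with hM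
  have hdet : M.det ≠ 0 := by
    rw [Matrix.det_fin_three]
    simp only [hM, Matrix.submatrix_apply]
    simp [Matrix.cons_val_zero, Matrix.cons_val_one, h14, h16, h36]
    refine ⟨⟨h12, h34⟩, h56⟩
  have hMrank : M.rank = 3 := by
    have : IsUnit M := by
      rw [Matrix.isUnit_iff_isUnit_det]
      exact hdet.isUnit
    rw [Matrix.rank_of_isUnit M this]
    simp
  have key : ((1 : Matrix (Fin 7) (Fin 7) ℝ).submatrix (![0, 2, 4] : Fin 3 → Fin 7)
        (Equiv.refl (Fin 7))) * A *
      ((1 : Matrix (Fin 7) (Fin 7) ℝ).submatrix (Equiv.refl (Fin 7))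
        (![1, 3, 5] : Fin 3 → Fin 7)) = M := by
    rw [Matrix.mul_submatrix_one, Matrix.one_submatrix_mul]
    ext i j
    rfl
  have h1 : M.rank ≤ A.rank := by
    rw [← key]
    exact le_trans (Matrix.rank_mul_le_left _ _)
      (Matrix.rank_mul_le_right _ _)
  omega

/-- Graph number 831 in the Atlas of Graphs has minimum rank 3 over the reals:
3 is the least element of the set of ranks of real symmetric 7×7 matrices whose
off-diagonal zero/nonzero pattern matches the edges of the graph. -/
theorem atlas831_minRank_eq_three :
    IsLeast {r : ℕ | ∃ A : Matrix (Fin 7) (Fin 7) ℝ, A.IsSymm ∧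
        (∀ i j : Fin 7, i ≠ j →
          (A i j ≠ 0 ↔
            ((i.val + 1, j.val + 1) ∈ atlas831Edges ∨
             (j.val + 1, i.val + 1) ∈ atlas831Edges))) ∧
        A.rank = r} 3 := by
  constructor
  · refine ⟨atlasA, ?_, ?_, ?_⟩
    · ext i j
      fin_cases i <;> fin_cases j <;> simp [atlasA]
    · intro i j hij
      fin_cases i <;> fin_cases j <;>
        simp_all [atlasA, atlas831Edges] <;> norm_num
    · have hge := rank_ge_three atlasA (by simp [atlasA]) (by simp [atlasA])
        (by simp [atlasA]) (by simp [atlasA]) (by simp [atlasA])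
        (by simp [atlasA])
      have hle := atlasA_rank_le
      omega
  · rintro r ⟨A, -, hpat, hrank⟩
    have h12 : A 0 1 ≠ 0 := (hpat 0 1 (by decide)).mpr (by decide)
    have h34 : A 2 3 ≠ 0 := (hpat 2 3 (by decide)).mpr (by decide)
    have h56 : A 4 5 ≠ 0 := (hpat 4 5 (by decide)).mpr (by decide)
    have h14 : A 0 3 = 0 := by
      by_contra h
      exact absurd ((hpat 0 3 (by decide)).mp h) (by decide)
    have h16 : A 0 5 = 0 := by
      by_contra h
      exact absurd ((hpat 0 5 (by decide)).mp h) (by decide)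
    have h36 : A 2 5 = 0 := by
      by_contra h
      exact absurd ((hpat 2 5 (by decide)).mp h) (by decide)
    have := rank_ge_three A h12 h34 h56 h14 h16 h36
    omega
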